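/- For all natural numbers l with 0 < l and all ordinals ξ ≤ χ, the relation E_{l+1}^χ is contained in E_l^ξ: for all finite sets a and b of ordinals all of whose elements are ≥ χ, if E_{l+1}^χ(a,b) holds, then E_l^ξ(a,b) holds. -/
import Mathlib

/-- The increasing enumeration of a finite set of ordinals, with the ordinal `ξ`
prepended at index `0` (so index `i + 1` gives the `i`-th element of `a` in
increasing order). -/
noncomputable def finsetEnum (ξ : Ordinal) (a : Finset Ordinal) : ℕ → Ordinal
  | 0 => ξ
  | (i + 1) => (a.sort (· ≤ ·)).getD i 0

/-- The relation `E_l^ξ` on finite sets of ordinals. -/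
def ERel (l : ℕ) (ξ : Ordinal) (a b : Finset Ordinal) : Prop :=
  a.card = b.card ∧
    ∀ i < a.card, ∃ μ ν ρ : Ordinal,
      finsetEnum ξ a (i + 1) = finsetEnum ξ a i + Ordinal.omega0 ^ (l : Ordinal) * μ + ρ ∧
      finsetEnum ξ b (i + 1) = finsetEnum ξ b i + Ordinal.omega0 ^ (l : Ordinal) * ν + ρ ∧
      ρ < Ordinal.omega0 ^ (l : Ordinal) ∧
      (min μ ν = 0 → μ = 0 ∧ ν = 0)

open Ordinal in
/-- Key step lemma: one step of `E_{l+1}` with shifted base can be turned into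
a step of `E_l` with the original base. -/
lemma key_step (l : ℕ) (δ α' β' μ ν ρ σ τ : Ordinal)
    (hσ : σ = (α' + δ) + omega0 ^ (l : Ordinal) * omega0 * μ + ρ)
    (hτ : τ = (β' + δ) + omega0 ^ (l : Ordinal) * omega0 * ν + ρ)
    (hmin : min μ ν = 0 → μ = 0 ∧ ν = 0) :
    ∃ μ' ν' ρ' : Ordinal,
      σ = α' + omega0 ^ (l : Ordinal) * μ' + ρ' ∧
      τ = β' + omega0 ^ (l : Ordinal) * ν' + ρ' ∧
      ρ' < omega0 ^ (l : Ordinal) ∧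
      (min μ' ν' = 0 → μ' = 0 ∧ ν' = 0) := by
  set e : Ordinal := omega0 ^ (l : Ordinal) with he_def
  have he : e ≠ 0 := (opow_pos _ omega0_pos).ne'
  rcases eq_or_ne μ 0 with hμ | hμ
  · obtain ⟨hμ0, hν0⟩ := hmin (by simp [hμ])
    subst hμ0; subst hν0
    obtain ⟨Q, R, hR, hQR⟩ : ∃ Q R, R < e ∧ δ + ρ = e * Q + R :=
      ⟨_, _, Ordinal.mod_lt _ he, (Ordinal.div_add_mod (δ + ρ) e).symm⟩
    refine ⟨Q, Q, R, ?_, ?_, hR,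
      fun hm => ⟨by simpa using hm, by simpa using hm⟩⟩
    · rw [hσ, mul_zero, add_zero, add_assoc, hQR, ← add_assoc]
    · rw [hτ, mul_zero, add_zero, add_assoc, hQR, ← add_assoc]
  · have hν : ν ≠ 0 := fun h0 => hμ (hmin (by simp [h0])).1
    have hωμ : (0:Ordinal) < omega0 * μ :=
      mul_pos omega0_pos (pos_iff_ne_zero.2 hμ)
    have hων : (0:Ordinal) < omega0 * ν :=
      mul_pos omega0_pos (pos_iff_ne_zero.2 hν)
    obtain ⟨q, r, hr, hδ⟩ : ∃ q r, r < e ∧ δ = e * q + r :=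
      ⟨_, _, Ordinal.mod_lt _ he, (Ordinal.div_add_mod δ e).symm⟩
    obtain ⟨p, s, hs, hρ⟩ : ∃ p s, s < e ∧ ρ = e * p + s :=
      ⟨_, _, Ordinal.mod_lt _ he, (Ordinal.div_add_mod ρ e).symm⟩
    subst hδ; subst hρ
    have habsμ : r + e * (omega0 * μ) = e * (omega0 * μ) :=
      Ordinal.add_absorp hr (Ordinal.le_mul_left e hωμ)
    have habsν : r + e * (omega0 * ν) = e * (omega0 * ν) :=
      Ordinal.add_absorp hr (Ordinal.le_mul_left e hων)
    have hM : q + omega0 * μ + p ≠ 0 := by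
      intro h0
      rw [Ordinal.add_eq_zero_iff, Ordinal.add_eq_zero_iff] at h0
      exact hωμ.ne' h0.1.2
    have hN : q + omega0 * ν + p ≠ 0 := by
      intro h0
      rw [Ordinal.add_eq_zero_iff, Ordinal.add_eq_zero_iff] at h0
      exact hων.ne' h0.1.2
    refine ⟨q + omega0 * μ + p, q + omega0 * ν + p, s, ?_, ?_, hs, fun hm => ?_⟩
    · rw [hσ, mul_assoc, mul_add, mul_add]
      simp only [add_assoc]
      rw [← add_assoc r, habsμ]
    · rw [hτ, mul_assoc, mul_add, mul_add]
      simp only [add_assoc]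
      rw [← add_assoc r, habsν]
    · rcases min_eq_iff.1 hm with ⟨h0, -⟩ | ⟨h0, -⟩
      · exact absurd h0 hM
      · exact absurd h0 hN

/-- For all natural numbers `l` with `0 < l` and all ordinals
`ξ ≤ χ`, the relation `E_{l+1}^χ` is contained in `E_l^ξ`: for all finite sets
`a` and `b` of ordinals all of whose elements are `≥ χ`, if `E_{l+1}^χ(a,b)`
holds, then `E_l^ξ(a,b)` holds. -/
theorem stmt0 (l : ℕ) (hl : 0 < l) (ξ χ : Ordinal) (hξχ : ξ ≤ χ)
    (a b : Finset Ordinal) (ha : ∀ γ ∈ a, χ ≤ γ) (hb : ∀ γ ∈ b, χ ≤ γ)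
    (h : ERel (l + 1) χ a b) : ERel l ξ a b := by
  obtain ⟨hcard, hstep⟩ := h
  refine ⟨hcard, fun i hi => ?_⟩
  obtain ⟨μ, ν, ρ, h1, h2, h3, h4⟩ := hstep i hi
  have hcast : Ordinal.omega0 ^ ((l + 1 : ℕ) : Ordinal)
      = Ordinal.omega0 ^ (l : Ordinal) * Ordinal.omega0 := by
    push_cast
    rw [Ordinal.opow_add, Ordinal.opow_one]
  rw [hcast] at h1 h2
  obtain ⟨δ, hδa, hδb⟩ : ∃ δ, finsetEnum χ a i = finsetEnum ξ a i + δ ∧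
      finsetEnum χ b i = finsetEnum ξ b i + δ := by
    cases i with
    | zero =>
      exact ⟨χ - ξ, (Ordinal.add_sub_cancel_of_le hξχ).symm,
        (Ordinal.add_sub_cancel_of_le hξχ).symm⟩
    | succ j => exact ⟨0, by simp [finsetEnum], by simp [finsetEnum]⟩
  rw [hδa] at h1
  rw [hδb] at h2
  have hea : finsetEnum χ a (i + 1) = finsetEnum ξ a (i + 1) := rfl
  have heb : finsetEnum χ b (i + 1) = finsetEnum ξ b (i + 1) := rfl
  rw [hea] at h1
  rw [heb] at h2
  exact key_step l δ (finsetEnum ξ a i) (finsetEnum ξ b i) μ ν ρ _ _ h1 h2 h4
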